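/- arXiv:1304.2276 — 7 statements merged into one kernel-verified Lean document; each statement's English description precedes it below -/
import Mathlib

section
/- Let s, r ≥ 1 and q ≥ 0 be integers. Suppose A ∈ ℝ^{s×s}, U ∈ ℝ^{s×r}, c ∈ ℝ^s and q_0,…,q_q ∈ ℝ^r satisfy the stage-order conditions c^k − k·A c^{k−1} − k!·U q_k = 0 for k = 0,1,…,q, and suppose α, β ∈ ℝ^{s×s} satisfy the interpolation order conditions α(c−e)^ℓ + β c^ℓ = c^ℓ for ℓ = 0,1,…,q−1. Define the block matrices A^exp = [[0, 0],[Aα, Aβ]] ∈ ℝ^{2s×2s}, U^exp = [[I_s, 0],[0, U]] ∈ ℝ^{2s×(s+r)}, the abscissa vector c^exp = ((c−e)ᵀ, cᵀ)ᵀ ∈ ℝ^{2s}, and the vectors q_k^exp = (((c−e)^k/k!)ᵀ, q_kᵀ)ᵀ ∈ ℝ^{s+r} for k = 0,…,q. Then the stage-order conditions hold for the block method: (c^exp)^k − k·A^exp (c^exp)^{k−1} − k!·U^exp q_k^exp = 0 for k = 0,1,…,q. -/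
open Matrix

/-- If the underlying GLM coefficients `(A, U, c, q_k)` satisfy the
stage-order conditions up to order `q`, and the interpolation matrices `α, β`
satisfy the interpolation order conditions for `ℓ = 0, …, q-1`, then the
block (extrapolation-based explicit) method satisfies the stage-order
conditions up to order `q`. -/
theorem stmt0 (s r q : ℕ) (hs : 1 ≤ s) (hr : 1 ≤ r)
    (A : Matrix (Fin s) (Fin s) ℝ) (U : Matrix (Fin s) (Fin r) ℝ)
    (c : Fin s → ℝ) (qv : ℕ → Fin r → ℝ)
    (α β : Matrix (Fin s) (Fin s) ℝ)
    (hstage : ∀ k, k ≤ q →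
      (fun i => c i ^ k) - (k : ℝ) • A.mulVec (fun i => c i ^ (k - 1))
        - (k.factorial : ℝ) • U.mulVec (qv k) = 0)
    (hinterp : ∀ ℓ, ℓ < q →
      α.mulVec (fun i => (c i - 1) ^ ℓ) + β.mulVec (fun i => c i ^ ℓ)
        = fun i => c i ^ ℓ) :
    ∀ k, k ≤ q →
      (fun i => (Sum.elim (fun j => c j - 1) c i) ^ k)
        - (k : ℝ) • (Matrix.fromBlocks 0 0 (A * α) (A * β)).mulVec
            (fun i => (Sum.elim (fun j => c j - 1) c i) ^ (k - 1))
        - (k.factorial : ℝ) • (Matrix.fromBlocks (1 : Matrix (Fin s) (Fin s) ℝ) 0 0 U).mulVec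
            (Sum.elim (fun j => (c j - 1) ^ k / (k.factorial : ℝ)) (qv k)) = 0 := by
  intro k hk
  have hfac : (k.factorial : ℝ) ≠ 0 := by
    exact_mod_cast k.factorial_ne_zero
  have hv : ∀ m : ℕ, (fun i => (Sum.elim (fun j => c j - 1) c i) ^ m)
      = Sum.elim (fun j => (c j - 1) ^ m) (fun j => c j ^ m) := by
    intro m; funext i; cases i <;> rfl
  rw [hv k, hv (k - 1), Matrix.fromBlocks_mulVec, Matrix.fromBlocks_mulVec]
  funext i
  cases i with
  | inl i =>
    simp [Matrix.zero_mulVec, Matrix.one_mulVec, hfac]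
    field_simp
    ring
  | inr i =>
    have hs0 := congrFun (hstage k hk) i
    simp only [Pi.sub_apply, Pi.smul_apply, Pi.zero_apply, smul_eq_mul] at hs0
    rcases Nat.eq_zero_or_pos k with hk0 | hkpos
    · subst hk0
      simpa using hs0
    · have hℓ : k - 1 < q := lt_of_lt_of_le (Nat.sub_lt hkpos one_pos) hk
      have hi := congrFun (hinterp (k - 1) hℓ) i
      simp only [Pi.add_apply] at hi
      simp only [Sum.elim_inr, Pi.sub_apply, Pi.smul_apply, Pi.add_apply,
        Matrix.zero_mulVec, Pi.zero_apply, smul_eq_mul, ← Matrix.mulVec_mulVec, Sum.elim_comp_inl, Sum.elim_comp_inr]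
      have hAdd : A.mulVec (α.mulVec (fun j => (c j - 1) ^ (k - 1))) i
          + A.mulVec (β.mulVec (fun j => (c j) ^ (k - 1))) i
          = A.mulVec (fun j => c j ^ (k - 1)) i := by
        rw [← Pi.add_apply, ← Matrix.mulVec_add, hinterp (k - 1) hℓ]
      rw [hAdd]
      linarith [hs0]
end

section
/- Let s, r ≥ 1 and p ≥ 0 be integers. Suppose A ∈ ℝ^{s×s}, U ∈ ℝ^{s×r}, B ∈ ℝ^{r×s}, V ∈ ℝ^{r×r}, c ∈ ℝ^s and q_0,…,q_p ∈ ℝ^r satisfy the stage-order conditions c^k − k·A c^{k−1} − k!·U q_k = 0 for k = 0,1,…,p and the order conditions Σ_{ℓ=0}^{k} (k!/ℓ!)·q_{k−ℓ} − k·B c^{k−1} − k!·V q_k = 0 for k = 0,1,…,p, and suppose α, β ∈ ℝ^{s×s} satisfy the interpolation order conditions α(c−e)^ℓ + β c^ℓ = c^ℓ for ℓ = 0,1,…,p−1. Define B^exp = [[Aα, Aβ],[Bα, Bβ]] ∈ ℝ^{(s+r)×2s}, V^exp = [[0, U],[0, V]] ∈ ℝ^{(s+r)×(s+r)}, c^exp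 = ((c−e)ᵀ, cᵀ)ᵀ ∈ ℝ^{2s}, and q_k^exp = (((c−e)^k/k!)ᵀ, q_kᵀ)ᵀ ∈ ℝ^{s+r} for k = 0,…,p. Then the order conditions hold for the block method: Σ_{ℓ=0}^{k} (k!/ℓ!)·q_{k−ℓ}^exp − k·B^exp (c^exp)^{k−1} − k!·V^exp q_k^exp = 0 for k = 0,1,…,p. -/
open Matrix

/-- If the underlying GLM `(A, U, B, V, c, q_k)` satisfies the
stage-order and order conditions up to order `p`, and `α, β` satisfy the
interpolation order conditions for `ℓ = 0, …, p-1`, then the block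
(extrapolation-based explicit) method satisfies the order conditions up to
order `p`. -/
theorem stmt1 (s r p : ℕ) (hs : 1 ≤ s) (hr : 1 ≤ r)
    (A : Matrix (Fin s) (Fin s) ℝ) (U : Matrix (Fin s) (Fin r) ℝ)
    (B : Matrix (Fin r) (Fin s) ℝ) (V : Matrix (Fin r) (Fin r) ℝ)
    (c : Fin s → ℝ) (qv : ℕ → Fin r → ℝ)
    (α β : Matrix (Fin s) (Fin s) ℝ)
    (hstage : ∀ k, k ≤ p →
      (fun i => c i ^ k) - (k : ℝ) • A.mulVec (fun i => c i ^ (k - 1))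
        - (k.factorial : ℝ) • U.mulVec (qv k) = 0)
    (hord : ∀ k, k ≤ p →
      (∑ ℓ ∈ Finset.range (k + 1), ((k.factorial : ℝ) / (ℓ.factorial : ℝ)) • qv (k - ℓ))
        - (k : ℝ) • B.mulVec (fun i => c i ^ (k - 1))
        - (k.factorial : ℝ) • V.mulVec (qv k) = 0)
    (hinterp : ∀ ℓ, ℓ < p →
      α.mulVec (fun i => (c i - 1) ^ ℓ) + β.mulVec (fun i => c i ^ ℓ)
        = fun i => c i ^ ℓ) :
    ∀ k, k ≤ p →
      (∑ ℓ ∈ Finset.range (k + 1), ((k.factorial : ℝ) / (ℓ.factorial : ℝ)) •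
          Sum.elim (fun j => (c j - 1) ^ (k - ℓ) / ((k - ℓ).factorial : ℝ)) (qv (k - ℓ)))
        - (k : ℝ) • (Matrix.fromBlocks (A * α) (A * β) (B * α) (B * β)).mulVec
            (fun i => (Sum.elim (fun j => c j - 1) c i) ^ (k - 1))
        - (k.factorial : ℝ) • (Matrix.fromBlocks 0 U 0 V).mulVec
            (Sum.elim (fun j => (c j - 1) ^ k / (k.factorial : ℝ)) (qv k)) = 0 := by
  intro k hk
  -- binomial identity
  have hbin : ∀ x : ℝ, (∑ ℓ ∈ Finset.range (k+1),
      ((k.factorial : ℝ)/(ℓ.factorial : ℝ)) * ((x-1)^(k-ℓ) / ((k-ℓ).factorial : ℝ))) = x ^ k := by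
    intro x
    have h := add_pow (1:ℝ) (x-1) k
    have h1 : (1:ℝ) + (x-1) = x := by ring
    rw [h1] at h
    rw [h]
    refine Finset.sum_congr rfl fun ℓ hℓ => ?_
    have hle : ℓ ≤ k := Nat.lt_succ_iff.mp (Finset.mem_range.mp hℓ)
    rw [Nat.cast_choose ℝ hle, one_pow]
    have h2 : (ℓ.factorial : ℝ) ≠ 0 := Nat.cast_ne_zero.mpr ℓ.factorial_ne_zero
    have h3 : ((k-ℓ).factorial : ℝ) ≠ 0 := Nat.cast_ne_zero.mpr (k-ℓ).factorial_ne_zero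
    field_simp
  have hv : (fun i => (Sum.elim (fun j => c j - 1) c i) ^ (k - 1))
      = Sum.elim (fun j => (c j - 1) ^ (k-1)) (fun j => c j ^ (k-1)) := by
    funext i; cases i <;> rfl
  have hmid : (k:ℝ) • (α.mulVec (fun j => (c j - 1)^(k-1)) + β.mulVec (fun j => c j ^ (k-1)))
      = (k:ℝ) • (fun i => c i ^ (k-1)) := by
    rcases Nat.eq_zero_or_pos k with h0 | hpos
    · subst h0; simp
    · rw [hinterp (k-1) (by omega)]
  rw [hv, Matrix.fromBlocks_mulVec, Matrix.fromBlocks_mulVec]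
  have hst := hstage k hk
  have hor := hord k hk
  funext x
  cases x with
  | inl i =>
    have hst' := congrFun hst i
    have hmid' := congrFun hmid
    simp only [Pi.sub_apply, Pi.smul_apply, Pi.add_apply, smul_eq_mul, Pi.zero_apply] at hst'
    simp only [Pi.sub_apply, Pi.smul_apply, Finset.sum_apply, Sum.elim_inl, Pi.add_apply,
      Pi.zero_apply, smul_eq_mul, Matrix.zero_mulVec, Sum.elim_comp_inl, Sum.elim_comp_inr,
      zero_add]
    rw [hbin (c i)]
    have hkey : (k:ℝ) * (((A*α).mulVec (fun j => (c j - 1)^(k-1))) i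
        + ((A*β).mulVec (fun j => c j ^ (k-1))) i)
        = (k:ℝ) * (A.mulVec (fun j => c j ^ (k-1))) i := by
      rw [← Matrix.mulVec_mulVec, ← Matrix.mulVec_mulVec, ← Pi.add_apply,
        ← Matrix.mulVec_add]
      have h5 := congrArg (fun v => (A.mulVec v) i) hmid
      simp only [Matrix.mulVec_smul, Pi.smul_apply, smul_eq_mul] at h5
      exact h5
    rw [hkey]
    linarith [hst']
  | inr i =>
    have hor' := congrFun hor i
    simp only [Pi.sub_apply, Pi.smul_apply, Finset.sum_apply, Pi.add_apply, smul_eq_mul,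
      Pi.zero_apply] at hor'
    simp only [Pi.sub_apply, Pi.smul_apply, Finset.sum_apply, Sum.elim_inr, Pi.add_apply,
      Pi.zero_apply, smul_eq_mul, Matrix.zero_mulVec, Sum.elim_comp_inl, Sum.elim_comp_inr,
      zero_add]
    have hkey : (k:ℝ) * (((B*α).mulVec (fun j => (c j - 1)^(k-1))) i
        + ((B*β).mulVec (fun j => c j ^ (k-1))) i)
        = (k:ℝ) * (B.mulVec (fun j => c j ^ (k-1))) i := by
      rw [← Matrix.mulVec_mulVec, ← Matrix.mulVec_mulVec, ← Pi.add_apply,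
        ← Matrix.mulVec_add]
      have h5 := congrArg (fun v => (B.mulVec v) i) hmid
      simp only [Matrix.mulVec_smul, Pi.smul_apply, smul_eq_mul] at h5
      exact h5
    rw [hkey]
    linarith [hor']
end

section
/- Let s, r ≥ 1 and p ≥ 0 be integers. Suppose A ∈ ℝ^{s×s}, U ∈ ℝ^{s×r}, B ∈ ℝ^{r×s}, V ∈ ℝ^{r×r}, c ∈ ℝ^s and q_0,…,q_p ∈ ℝ^r satisfy the stage-order conditions c^k − k·A c^{k−1} − k!·U q_k = 0 for k = 0,1,…,p and the order conditions Σ_{ℓ=0}^{k} (k!/ℓ!)·q_{k−ℓ} − k·B c^{k−1} − k!·V q_k = 0 for k = 0,1,…,p. Define the implicit block method A^imp = [[0, 0],[0, A]] ∈ ℝ^{2s×2s}, U^imp = [[I_s, 0],[0, U]] ∈ ℝ^{2s×(s+r)}, B^imp = [[0, A],[0, B]] ∈ ℝ^{(s+r)×2s}, V^imp = [[0, U],[0, V]] ∈ ℝ^{(s+r)×(s+r)}, c^imp = ((c−e)ᵀ, cᵀ)ᵀ ∈ ℝ^{2s}, and q_k^imp = (((c−e)^k/k!)ᵀ, q_kᵀ)ᵀ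 ∈ ℝ^{s+r}. Then the block method satisfies the stage-order conditions (c^imp)^k − k·A^imp (c^imp)^{k−1} − k!·U^imp q_k^imp = 0 for k = 0,1,…,p, and the order conditions Σ_{ℓ=0}^{k} (k!/ℓ!)·q_{k−ℓ}^imp − k·B^imp (c^imp)^{k−1} − k!·V^imp q_k^imp = 0 for k = 0,1,…,p. -/
open Matrix

lemma binom_sum (x : ℝ) (k : ℕ) :
    ∑ ℓ ∈ Finset.range (k + 1),
      (k.factorial : ℝ) / (ℓ.factorial : ℝ) * ((x - 1) ^ (k - ℓ) / ((k - ℓ).factorial : ℝ))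
      = x ^ k := by
  have h : x ^ k = ((x - 1) + 1) ^ k := by ring_nf
  rw [h, add_pow]
  rw [← Finset.sum_range_reflect]
  refine Finset.sum_congr rfl ?_
  intro ℓ hℓ
  simp only [Finset.mem_range, Nat.lt_succ_iff] at hℓ
  have h1 : k + 1 - 1 - ℓ = k - ℓ := by omega
  have h4 : k - (k - ℓ) = ℓ := by omega
  rw [h1, h4, one_pow, mul_one, Nat.cast_choose ℝ hℓ]
  have h2 : (ℓ.factorial : ℝ) ≠ 0 := Nat.cast_ne_zero.2 ℓ.factorial_ne_zero
  have h3 : ((k - ℓ).factorial : ℝ) ≠ 0 := Nat.cast_ne_zero.2 (k - ℓ).factorial_ne_zero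
  field_simp

/-- If the underlying GLM `(A, U, B, V, c, q_k)` satisfies the
stage-order and order conditions up to order `p`, then the implicit block
method (the implicit part of the extrapolation-based IMEX GLM written as a
GLM over two steps) satisfies the stage-order and order conditions up to
order `p`. -/
theorem stmt2 (s r p : ℕ) (hs : 1 ≤ s) (hr : 1 ≤ r)
    (A : Matrix (Fin s) (Fin s) ℝ) (U : Matrix (Fin s) (Fin r) ℝ)
    (B : Matrix (Fin r) (Fin s) ℝ) (V : Matrix (Fin r) (Fin r) ℝ)
    (c : Fin s → ℝ) (qv : ℕ → Fin r → ℝ)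
    (hstage : ∀ k, k ≤ p →
      (fun i => c i ^ k) - (k : ℝ) • A.mulVec (fun i => c i ^ (k - 1))
        - (k.factorial : ℝ) • U.mulVec (qv k) = 0)
    (hord : ∀ k, k ≤ p →
      (∑ ℓ ∈ Finset.range (k + 1), ((k.factorial : ℝ) / (ℓ.factorial : ℝ)) • qv (k - ℓ))
        - (k : ℝ) • B.mulVec (fun i => c i ^ (k - 1))
        - (k.factorial : ℝ) • V.mulVec (qv k) = 0) :
    (∀ k, k ≤ p →
      (fun i => (Sum.elim (fun j => c j - 1) c i) ^ k)
        - (k : ℝ) • (Matrix.fromBlocks 0 0 0 A).mulVec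
            (fun i => (Sum.elim (fun j => c j - 1) c i) ^ (k - 1))
        - (k.factorial : ℝ) • (Matrix.fromBlocks (1 : Matrix (Fin s) (Fin s) ℝ) 0 0 U).mulVec
            (Sum.elim (fun j => (c j - 1) ^ k / (k.factorial : ℝ)) (qv k)) = 0) ∧
    (∀ k, k ≤ p →
      (∑ ℓ ∈ Finset.range (k + 1), ((k.factorial : ℝ) / (ℓ.factorial : ℝ)) •
          Sum.elim (fun j => (c j - 1) ^ (k - ℓ) / ((k - ℓ).factorial : ℝ)) (qv (k - ℓ)))
        - (k : ℝ) • (Matrix.fromBlocks 0 A 0 B).mulVec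
            (fun i => (Sum.elim (fun j => c j - 1) c i) ^ (k - 1))
        - (k.factorial : ℝ) • (Matrix.fromBlocks 0 U 0 V).mulVec
            (Sum.elim (fun j => (c j - 1) ^ k / (k.factorial : ℝ)) (qv k)) = 0) := by
  have hf : ∀ k : ℕ, ((k.factorial : ℝ)) ≠ 0 := fun k => Nat.cast_ne_zero.2 k.factorial_ne_zero
  constructor
  · intro k hk
    have h := hstage k hk
    funext i
    rcases i with j | j
    · simp only [Pi.sub_apply, Pi.smul_apply, Matrix.mulVec, dotProduct,
        Fintype.sum_sum_type, Matrix.fromBlocks_apply₁₁, Matrix.fromBlocks_apply₁₂,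
        Matrix.zero_apply, zero_mul, Finset.sum_const_zero, add_zero, zero_add,
        smul_eq_mul, mul_zero, Sum.elim_inl, Pi.zero_apply]
      rw [Finset.sum_eq_single j]
      · rw [Matrix.one_apply_eq]
        field_simp
        ring
      · intro b _ hb; rw [Matrix.one_apply_ne (Ne.symm hb)]; ring
      · intro hj; exact absurd (Finset.mem_univ j) hj
    · have := congrFun h j
      simpa [Matrix.mulVec, dotProduct, Fintype.sum_sum_type] using this
  · intro k hk
    funext i
    rcases i with j | j
    · have h := congrFun (hstage k hk) j
      simp only [Pi.sub_apply, Pi.smul_apply, Pi.zero_apply, smul_eq_mul,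
        Matrix.mulVec, dotProduct] at h
      simp only [Finset.sum_apply, Pi.sub_apply, Pi.smul_apply, Pi.zero_apply, smul_eq_mul,
        Sum.elim_inl, Sum.elim_inr, Matrix.mulVec, dotProduct, Fintype.sum_sum_type,
        Matrix.fromBlocks_apply₁₁, Matrix.fromBlocks_apply₁₂, Matrix.zero_apply,
        zero_mul, Finset.sum_const_zero, zero_add]
      rw [binom_sum (c j) k]
      convert h using 2
    · have h := congrFun (hord k hk) j
      simp only [Finset.sum_apply, Pi.sub_apply, Pi.smul_apply, Pi.zero_apply, smul_eq_mul,
        Sum.elim_inr, Matrix.mulVec, dotProduct, Fintype.sum_sum_type,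
        Matrix.fromBlocks_apply₂₁, Matrix.fromBlocks_apply₂₂, Matrix.zero_apply,
        zero_mul, Finset.sum_const_zero, zero_add] at h ⊢
      exact h
end

section
/- Let s ≥ 1 and p ≥ 1 be integers, c ∈ ℝ^s, and α, β ∈ ℝ^{s×s} with β strictly lower triangular satisfy the interpolation order conditions Σ_{k=1}^{s} α_{jk}(c_k−1)^ℓ = c_j^ℓ − Σ_{k=1}^{j−1} β_{jk} c_k^ℓ for ℓ = 0,1,…,p−1 and j = 1,…,s. Let φ: ℝ → ℝ be p-times continuously differentiable and t ∈ ℝ. Then for each j = 1,…,s, the extrapolation error h ↦ φ(t + c_j h) − Σ_{k=1}^{s} α_{jk} φ(t + (c_k−1)h) − Σ_{k=1}^{j−1} β_{jk} φ(t + c_k h) is O(h^p) as h → 0. -/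
open Matrix Filter Asymptotics

lemma aux_step (F G : ℝ → ℝ) (p : ℕ) (hF0 : F 0 = 0)
    (hF : ∀ x : ℝ, HasDerivAt F (G x) x) (hG : G =O[nhds 0] fun h : ℝ => h ^ p) :
    F =O[nhds 0] fun h : ℝ => h ^ (p + 1) := by
  obtain ⟨C, hC0, hCb⟩ := hG.exists_nonneg
  rw [isBigOWith_iff] at hCb
  rw [Metric.eventually_nhds_iff] at hCb
  obtain ⟨ε, hε, hb⟩ := hCb
  rw [isBigO_iff]
  refine ⟨C, Metric.eventually_nhds_iff.mpr ⟨ε, hε, fun {h} hh => ?_⟩⟩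
  have key : ∀ y ∈ Metric.closedBall (0 : ℝ) |h|, ‖G y‖ ≤ C * |h| ^ p := by
    intro y hy
    simp only [Metric.mem_closedBall, Real.dist_eq, sub_zero] at hy
    have hyε : dist y 0 < ε := by
      rw [Real.dist_eq, sub_zero]
      exact lt_of_le_of_lt hy (by simpa [Real.dist_eq] using hh)
    calc ‖G y‖ ≤ C * ‖y ^ p‖ := hb hyε
      _ = C * |y| ^ p := by rw [Real.norm_eq_abs, abs_pow]
      _ ≤ C * |h| ^ p :=
            mul_le_mul_of_nonneg_left (pow_le_pow_left₀ (abs_nonneg y) hy p) hC0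
  have := Convex.norm_image_sub_le_of_norm_hasDerivWithin_le
    (f := F) (f' := G) (s := Metric.closedBall (0 : ℝ) |h|) (C := C * |h| ^ p)
    (x := (0 : ℝ)) (y := h)
    (fun x _ => (hF x).hasDerivWithinAt) key (convex_closedBall _ _)
    (Metric.mem_closedBall_self (abs_nonneg h))
    (by simp [Metric.mem_closedBall, Real.dist_eq])
  simp only [hF0, sub_zero, Real.norm_eq_abs] at this ⊢
  calc |F h| ≤ C * |h| ^ p * |h| := this
    _ = C * |h ^ (p + 1)| := by rw [abs_pow]; ring

lemma aux {ι : Type*} [Fintype ι] (p : ℕ) (a d : ι → ℝ) (φ : ℝ → ℝ)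
    (hφ : ContDiff ℝ p φ) (hcond : ∀ ℓ < p, ∑ i, a i * d i ^ ℓ = 0) (t : ℝ) :
    (fun h : ℝ => ∑ i, a i * φ (t + d i * h)) =O[nhds 0] fun h : ℝ => h ^ p := by
  induction p generalizing a φ with
  | zero =>
    simp only [pow_zero]
    exact Tendsto.isBigO_one ℝ
      (Continuous.tendsto (by continuity) 0)
  | succ p ih =>
    have hcast : ((p + 1 : ℕ) : WithTop ℕ∞) = (p : WithTop ℕ∞) + 1 := by push_cast; ring
    rw [hcast, contDiff_succ_iff_deriv] at hφ
    obtain ⟨hdiff, -, hderiv⟩ := hφ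
    set ψ := deriv φ with hψ
    have hF0 : (∑ i, a i * φ (t + d i * 0)) = 0 := by
      have h0 := hcond 0 (Nat.succ_pos p)
      simp only [pow_zero, mul_one] at h0
      simp [← Finset.sum_mul, h0]
    have hD : ∀ x : ℝ, HasDerivAt (fun h : ℝ => ∑ i, a i * φ (t + d i * h))
        (∑ i, (a i * d i) * ψ (t + d i * x)) x := by
      intro x
      have : ∀ i : ι, HasDerivAt (fun h : ℝ => a i * φ (t + d i * h))
          ((a i * d i) * ψ (t + d i * x)) x := by
        intro i
        have hin : HasDerivAt (fun h : ℝ => t + d i * h) (d i) x := by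
          simpa using ((hasDerivAt_id x).const_mul (d i)).const_add t
        have hout : HasDerivAt φ (ψ (t + d i * x)) (t + d i * x) :=
          (hdiff (t + d i * x)).hasDerivAt
        have := (hout.comp x hin).const_mul (a i)
        exact this.congr_deriv (by ring)
      exact HasDerivAt.fun_sum (fun i _ => this i)
    have hG : (fun x : ℝ => ∑ i, (a i * d i) * ψ (t + d i * x)) =O[nhds 0]
        fun h : ℝ => h ^ p := by
      apply ih (fun i => a i * d i) ψ hderiv
      intro ℓ hℓ
      have := hcond (ℓ + 1) (by omega)
      calc ∑ i, (a i * d i) * d i ^ ℓ = ∑ i, a i * d i ^ (ℓ + 1) := by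
            apply Finset.sum_congr rfl; intro i _; ring
        _ = 0 := this
    exact aux_step _ _ p (by simpa using hF0) hD hG

/-- If the extrapolation coefficients `α, β` (with `β` strictly
lower triangular) satisfy the interpolation order conditions of order `p`,
then for every `p`-times continuously differentiable function `φ` the
extrapolation error at each abscissa is `O(h^p)` as `h → 0`. -/
theorem stmt3 (s p : ℕ) (hs : 1 ≤ s) (hp : 1 ≤ p) (c : Fin s → ℝ)
    (α β : Matrix (Fin s) (Fin s) ℝ)
    (hβ : ∀ j k : Fin s, j ≤ k → β j k = 0)
    (hinterp : ∀ ℓ, ℓ < p → ∀ j : Fin s,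
      ∑ k, α j k * (c k - 1) ^ ℓ
        = c j ^ ℓ - ∑ k ∈ Finset.univ.filter (fun k => k < j), β j k * c k ^ ℓ)
    (φ : ℝ → ℝ) (hφ : ContDiff ℝ p φ) (t : ℝ) :
    ∀ j : Fin s,
      (fun h : ℝ =>
          φ (t + c j * h) - ∑ k, α j k * φ (t + (c k - 1) * h)
            - ∑ k ∈ Finset.univ.filter (fun k => k < j), β j k * φ (t + c k * h))
        =O[nhds (0 : ℝ)] (fun h : ℝ => h ^ p) := by
  intro j
  set a : Option (Fin s ⊕ Fin s) → ℝ := fun i => match i with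
    | none => 1
    | some (.inl k) => -α j k
    | some (.inr k) => -(if k < j then β j k else 0) with ha
  set d : Option (Fin s ⊕ Fin s) → ℝ := fun i => match i with
    | none => c j
    | some (.inl k) => c k - 1
    | some (.inr k) => c k with hd
  have key := aux p a d φ hφ (fun ℓ hℓ => by
    have h1 := hinterp ℓ hℓ j
    rw [Finset.sum_filter] at h1
    simp only [ha, hd, Fintype.sum_option, Fintype.sum_sum_type]
    simp only [neg_mul, Finset.sum_neg_distrib, one_mul, ite_mul, zero_mul]
    linarith [h1]) t
  refine key.congr (fun h => ?_) (fun _ => rfl)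
  simp only [ha, hd, Fintype.sum_option, Fintype.sum_sum_type, Finset.sum_filter]
  simp only [neg_mul, Finset.sum_neg_distrib, one_mul, ite_mul, zero_mul]
  ring
end

section
/- Let c = (0, 1/3, 2/3, 1) ∈ ℝ⁴, β₂₁, β₃₁, β₃₂, β₄₁, β₄₂, β₄₃ ∈ ℝ, and let β be the strictly lower triangular matrix with these entries below the diagonal. Then the unique matrix α ∈ ℝ^{4×4} satisfying Σ_{k=1}^{4} α_{jk}(c_k−1)^ℓ = c_j^ℓ − Σ_{k=1}^{j−1} β_{jk} c_k^ℓ for ℓ = 0,1,2,3 and j = 1,…,4 is α = [[0, 0, 0, 1],[−1, 4, −6, 4−β₂₁],[β₃₂−4, 15−4β₃₂, 2(3β₃₂−10), 10−β₃₁−4β₃₂],[β₄₂+4β₄₃−10, 36−4β₄₂−15β₄₃, 6β₄₂+20β₄₃−45, 20−β₄₁−4β₄₂−10β₄₃]]. -/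
open Matrix
set_option maxRecDepth 8000
set_option maxHeartbeats 1600000

/-- For `c = (0, 1/3, 2/3, 1)` and strictly lower triangular `β`,
the unique matrix `α` satisfying the interpolation order conditions of order
`4` is the explicitly given matrix. -/
theorem stmt7 (b21 b31 b32 b41 b42 b43 : ℝ) (α : Matrix (Fin 4) (Fin 4) ℝ) :
    (∀ ℓ, ℓ < 4 → ∀ j : Fin 4,
        ∑ k, α j k * ((![0, 1/3, 2/3, 1] : Fin 4 → ℝ) k - 1) ^ ℓ
          = (![0, 1/3, 2/3, 1] : Fin 4 → ℝ) j ^ ℓ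
            - ∑ k ∈ Finset.univ.filter (fun k => k < j),
                (!![0, 0, 0, 0;
                    b21, 0, 0, 0;
                    b31, b32, 0, 0;
                    b41, b42, b43, 0] : Matrix (Fin 4) (Fin 4) ℝ) j k
                  * (![0, 1/3, 2/3, 1] : Fin 4 → ℝ) k ^ ℓ)
      ↔ α = !![0, 0, 0, 1;
               -1, 4, -6, 4 - b21;
               b32 - 4, 15 - 4 * b32, 2 * (3 * b32 - 10), 10 - b31 - 4 * b32;
               b42 + 4 * b43 - 10, 36 - 4 * b42 - 15 * b43,
                 6 * b42 + 20 * b43 - 45, 20 - b41 - 4 * b42 - 10 * b43] := by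
  constructor
  · intro h
    have h0 := h 0 (by norm_num)
    have h1 := h 1 (by norm_num)
    have h2 := h 2 (by norm_num)
    have h3 := h 3 (by norm_num)
    simp only [Fin.sum_univ_four, Fin.isValue, Matrix.cons_val_zero, Matrix.cons_val_one,
      Matrix.head_cons, Matrix.cons_val_two, Matrix.tail_cons, Matrix.cons_val_three] at h0 h1 h2 h3
    have e00 := h0 0; have e01 := h0 1; have e02 := h0 2; have e03 := h0 3
    have e10 := h1 0; have e11 := h1 1; have e12 := h1 2; have e13 := h1 3
    have e20 := h2 0; have e21 := h2 1; have e22 := h2 2; have e23 := h2 3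
    have e30 := h3 0; have e31 := h3 1; have e32 := h3 2; have e33 := h3 3
    simp +decide only [Finset.sum_filter, Fin.sum_univ_four] at e00 e01 e02 e03 e10 e11 e12 e13 e20 e21 e22 e23 e30 e31 e32 e33
    norm_num [Matrix.cons_val_two, Matrix.cons_val_three] at e00 e01 e02 e03 e10 e11 e12 e13 e20 e21 e22 e23 e30 e31 e32 e33
    ext i j
    fin_cases i <;> fin_cases j <;> simp only [Fin.reduceFinMk, Fin.zero_eta, Fin.mk_one] <;> norm_num [Matrix.cons_val_two, Matrix.cons_val_three] <;>
      linarith [e00, e01, e02, e03, e10, e11, e12, e13, e20, e21, e22, e23, e30, e31, e32, e33]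
  · intro h
    subst h
    intro ℓ hℓ j
    interval_cases ℓ <;> fin_cases j <;>
      norm_num [Finset.sum_filter, Fin.sum_univ_four, Fin.lt_def, Matrix.cons_val_two, Matrix.cons_val_three] <;> ring
end

section
/- For θ = 1, define p(w, z₀, z₁) = (1−z₁)²w² − (1−z₁)(1+z₀)w (the stability polynomial of the IMEX θ-method with θ = 1). Then for every z₀ ∈ ℂ the following are equivalent: (i) for every y ∈ ℝ, every root w ∈ ℂ of the quadratic p(·, z₀, iy) satisfies |w| < 1; (ii) |z₀ + 1| < 1. In other words, the constrained stability region S_{π/2}(1) of the IMEX θ-method with θ = 1 is exactly the open unit disk centered at −1, which coincides with the stability region S_E(1) of its explicit part. -/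
/-- For the IMEX θ-method with `θ = 1`, with stability polynomial
`p(w,z₀,z₁) = (1-z₁)²w² - (1-z₁)(1+z₀)w`, the constrained stability region
`S_{π/2}(1)` (all roots of `p(·,z₀,iy)` strictly inside the unit circle for
every real `y`) is exactly the open unit disk centered at `-1`. -/
theorem stmt12 (z₀ : ℂ) :
    (∀ y : ℝ, ∀ w : ℂ,
        (1 - Complex.I * (y : ℂ)) ^ 2 * w ^ 2
          - (1 - Complex.I * (y : ℂ)) * (1 + z₀) * w = 0 →
        ‖w‖ < 1)
      ↔ ‖z₀ + 1‖ < 1 := by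
  constructor
  · intro h
    have := h 0 (1 + z₀) (by push_cast; ring)
    simpa [add_comm] using this
  · intro h y w hw
    have hA : (1 - Complex.I * (y : ℂ)) ≠ 0 := by
      intro h0
      have := congrArg Complex.re h0
      simp [Complex.ext_iff] at this
    have hfac : (1 - Complex.I * (y : ℂ)) * w *
        ((1 - Complex.I * (y : ℂ)) * w - (1 + z₀)) = 0 := by
      linear_combination hw
    rcases mul_eq_zero.mp hfac with h1 | h2
    · rcases mul_eq_zero.mp h1 with h1 | h1
      · exact absurd h1 hA
      · simp [h1]
    · have hw' : (1 - Complex.I * (y : ℂ)) * w = 1 + z₀ := by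
        exact sub_eq_zero.mp h2
      have habs : ‖1 - Complex.I * (y : ℂ)‖ * ‖w‖
          = ‖1 + z₀‖ := by
        rw [← norm_mul, hw']
      have hge : 1 ≤ ‖1 - Complex.I * (y : ℂ)‖ := by
        have : ‖1 - Complex.I * (y : ℂ)‖
            = Real.sqrt (1 + y ^ 2) := by
          rw [Complex.norm_def, Complex.normSq_apply]
          simp [Complex.sub_re, Complex.sub_im]
          ring_nf
        rw [this]
        nlinarith [Real.sq_sqrt (by positivity : (0:ℝ) ≤ 1 + y ^ 2),
          Real.sqrt_nonneg (1 + y ^ 2), sq_nonneg y]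
      have h1 : ‖1 + z₀‖ < 1 := by rwa [add_comm]
      nlinarith [norm_nonneg w]
end

section
/- For θ = 1/2, define p(w, z₀, z₁) = (1−z₁/2)²w² − (1−z₁/2)(1 + z₀/2 + z₁/2)w − (1/2)z₀(1−z₁/2) (the stability polynomial of the IMEX θ-method with θ = 1/2). Then for every z₀ ∈ ℂ there exist y ∈ ℝ and a root w ∈ ℂ of p(·, z₀, iy) with |w| ≥ 1. In other words, the constrained stability region S_{π/2}(1/2) of the IMEX θ-method with θ = 1/2 is empty. -/
lemma key13 (s : ℝ) (w : ℂ) (hw : ‖w‖ = 1) (hw1 : w ≠ -1) :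
    ∃ y : ℝ,
      (1 - Complex.I * (y : ℂ) / 2) ^ 2 * w ^ 2
        - (1 - Complex.I * (y : ℂ) / 2)
            * (1 + (2 * Complex.I * (s : ℂ) * w) / 2 + Complex.I * (y : ℂ) / 2) * w
        - (1 / 2) * (2 * Complex.I * (s : ℂ) * w) * (1 - Complex.I * (y : ℂ) / 2) = 0 := by
  have hwn : Complex.normSq w = 1 := by
    rw [Complex.normSq_eq_norm_sq, hw]; norm_num
  have hwc : w * (starRingEnd ℂ) w = 1 := by
    rw [Complex.mul_conj, hwn]; norm_num
  have hw1' : w + 1 ≠ 0 := fun h => hw1 (by linear_combination h)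
  set n : ℝ := Complex.normSq (w + 1) with hndef
  have hn0 : (n : ℂ) ≠ 0 := by
    simp only [hndef, ne_eq, Complex.ofReal_eq_zero]
    exact fun h => hw1' (Complex.normSq_eq_zero.mp h)
  have hn0' : n ≠ 0 := by exact_mod_cast hn0
  have hn' : ((n : ℝ) : ℂ) = (w + 1) * ((starRingEnd ℂ) w + 1) := by
    rw [hndef, ← Complex.mul_conj]
    simp
  have hsc : w - (starRingEnd ℂ) w = 2 * (w.im : ℂ) * Complex.I := by
    have := Complex.sub_conj w
    push_cast at this
    linear_combination this
  have KI : (w - 1) * (n : ℂ) = 2 * Complex.I * (w.im : ℂ) * (w + 1) := by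
    linear_combination (w + 1) * hsc + (w - 1) * hn' + (w + 1) * hwc
  refine ⟨(4 * w.im - 2 * s * n) / n, ?_⟩
  have hyid : (((4 * w.im - 2 * s * n) / n : ℝ) : ℂ) * (n : ℂ)
      = 4 * (w.im : ℂ) - 2 * (s : ℂ) * (n : ℂ) := by
    have h : ((4 * w.im - 2 * s * n) / n : ℝ) * n = 4 * w.im - 2 * s * n := by
      field_simp
    exact_mod_cast congrArg (Complex.ofReal) h
  set Y : ℂ := (((4 * w.im - 2 * s * n) / n : ℝ) : ℂ) with hY
  have hmain : ((1 - Complex.I * Y / 2) ^ 2 * w ^ 2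
        - (1 - Complex.I * Y / 2)
            * (1 + (2 * Complex.I * (s : ℂ) * w) / 2 + Complex.I * Y / 2) * w
        - (1 / 2) * (2 * Complex.I * (s : ℂ) * w) * (1 - Complex.I * Y / 2)) * (n : ℂ) = 0 := by
    linear_combination ((1 - Complex.I * Y / 2) * w) * KI
      - ((1 - Complex.I * Y / 2) * w * (Complex.I / 2) * (w + 1)) * hyid
  have := mul_eq_zero.mp hmain
  tauto

/-- For the IMEX θ-method with `θ = 1/2`, the constrained
stability region `S_{π/2}(1/2)` is empty: for every `z₀` there are `y ∈ ℝ`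
and a root `w` of the stability polynomial `p(·,z₀,iy)` with `|w| ≥ 1`. -/
theorem stmt13 (z₀ : ℂ) :
    ∃ y : ℝ, ∃ w : ℂ,
      (1 - Complex.I * (y : ℂ) / 2) ^ 2 * w ^ 2
        - (1 - Complex.I * (y : ℂ) / 2)
            * (1 + z₀ / 2 + Complex.I * (y : ℂ) / 2) * w
        - (1 / 2) * z₀ * (1 - Complex.I * (y : ℂ) / 2) = 0
      ∧ 1 ≤ ‖w‖ := by
  by_cases hz : z₀ = 0
  · refine ⟨0, 1, ?_, by norm_num⟩
    rw [hz]; push_cast; ring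
  · set m : ℝ := ‖z₀‖ with hm
    have hm0 : (m : ℂ) ≠ 0 := by
      simp [hm, norm_ne_zero_iff.mpr hz]
    by_cases hcase : z₀ = -Complex.I * m
    · -- take s = -m/2, w = 1
      have hz' : z₀ = 2 * Complex.I * ((-m / 2 : ℝ) : ℂ) * 1 := by
        rw [hcase]; push_cast; ring
      obtain ⟨y, hy⟩ := key13 (-m / 2) 1 (by simp) (by norm_num)
      exact ⟨y, 1, by rw [hz']; exact hy, by norm_num⟩
    · -- take s = m/2, w = z₀ / (I * m)
      set w : ℂ := z₀ / (Complex.I * m) with hwdef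
      have habs : ‖w‖ = 1 := by
        rw [hwdef, norm_div, norm_mul]
        simp [hm, norm_ne_zero_iff.mpr hz]
      have hwne : w ≠ -1 := by
        intro h
        apply hcase
        have h' : z₀ = -1 * (Complex.I * m) := by
          rw [← h, hwdef]
          field_simp
        linear_combination h'
      have hz' : z₀ = 2 * Complex.I * ((m / 2 : ℝ) : ℂ) * w := by
        rw [hwdef]
        field_simp
        push_cast
        ring
      obtain ⟨y, hy⟩ := key13 (m / 2) w habs hwne
      exact ⟨y, w, by rw [hz']; exact hy, le_of_eq habs.symm⟩
end
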